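/- Let α > 0 and β, γ ∈ ℝ. With Λ₀ := α, Λ₂ := α(1−√2+(2−√2)i), Λ₁μ := √(iα), Λ₁ω := i·(1 − √(2α)/(2√(iα))), and M := (3/4)γ + β²·(Λ₀⁻¹ + (2Λ₂)⁻¹), one has Im(M·conj(Λ₁μ)) / Im(Λ₁ω·conj(Λ₁μ)) = −( 7β²/(6α) + (3/4)γ ). -/

import Mathlib

noncomputable def csqrt (z : ℂ) : ℂ := z ^ (1/2 : ℂ)

lemma csqrt_I_mul {α : ℝ} (hα : 0 < α) :
    csqrt (Complex.I * α) = (Real.sqrt (α/2) : ℂ) * (1 + Complex.I) := by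
  have hne : Complex.I * α ≠ 0 := by
    simp [Complex.I_ne_zero, Complex.ofReal_eq_zero, hα.ne']
  rw [csqrt, Complex.cpow_def_of_ne_zero hne]
  rw [mul_comm Complex.I (α:ℂ), Complex.log_ofReal_mul hα Complex.I_ne_zero,
    Complex.log_I]
  have h1 : ((Real.log α : ℂ) + (Real.pi:ℂ)/2 * Complex.I) * (1/2)
      = ((Real.log α / 2 : ℝ) : ℂ) + ((Real.pi/4 : ℝ) : ℂ) * Complex.I := by
    push_cast; ring
  rw [h1, Complex.exp_add, Complex.exp_mul_I, ← Complex.ofReal_exp,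
    ← Complex.ofReal_cos, ← Complex.ofReal_sin]
  have he : Real.exp (Real.log α / 2) = Real.sqrt α := by
    rw [← Real.log_sqrt hα.le, Real.exp_log (Real.sqrt_pos.2 hα)]
  rw [he, Real.cos_pi_div_four, Real.sin_pi_div_four]
  have h22 : Real.sqrt 2 * Real.sqrt 2 = 2 := Real.mul_self_sqrt (by norm_num)
  have h2 : Real.sqrt (α/2) = Real.sqrt α * (Real.sqrt 2 / 2) := by
    rw [Real.sqrt_div hα.le, div_eq_iff (Real.sqrt_ne_zero'.2 (by norm_num : (0:ℝ) < 2))]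
    linear_combination (-(Real.sqrt α) / 2) * h22
  rw [h2]; push_cast; ring

theorem stmt_12 (α β γ : ℝ) (hα : 0 < α) :
    let Λ₀ : ℂ := (α : ℂ)
    let Λ₂ : ℂ := (α : ℂ) * (1 - Real.sqrt 2 + (2 - Real.sqrt 2) * Complex.I)
    let Λ₁μ : ℂ := csqrt (Complex.I * α)
    let Λ₁ω : ℂ := Complex.I * (1 - (Real.sqrt (2*α) : ℂ) / (2 * csqrt (Complex.I * α)))
    let M : ℂ := (3/4 : ℂ) * γ + (β:ℂ)^2 * (Λ₀⁻¹ + (2*Λ₂)⁻¹)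
    (M * (starRingEnd ℂ) Λ₁μ).im / (Λ₁ω * (starRingEnd ℂ) Λ₁μ).im
      = -(7*β^2/(6*α) + (3/4) * γ) := by
  intro Λ₀ Λ₂ Λ₁μ Λ₁ω M
  set s : ℝ := Real.sqrt (α/2) with hs
  have hspos : 0 < s := Real.sqrt_pos.2 (by linarith)
  have hs2 : s^2 = α/2 := Real.sq_sqrt (by linarith)
  set t : ℝ := Real.sqrt 2 with ht
  have ht2 : t^2 = 2 := Real.sq_sqrt (by norm_num)
  have htlt : t < 2 := by nlinarith
  have hane : (α:ℂ) ≠ 0 := by exact_mod_cast (by positivity : (α:ℝ) ≠ 0)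
  -- key values
  have hμ : Λ₁μ = (s:ℂ) * (1 + Complex.I) := csqrt_I_mul hα
  have hconj : (starRingEnd ℂ) Λ₁μ = (s:ℂ) * (1 - Complex.I) := by
    rw [hμ, map_mul, map_add, map_one, Complex.conj_ofReal, Complex.conj_I]; ring
  have h2α : Real.sqrt (2*α) = 2*s := by
    rw [show 2*α = (2*s)^2 by nlinarith, Real.sqrt_sq (by positivity)]
  have hω : Λ₁ω = (-1 + Complex.I)/2 := by
    show Complex.I * (1 - (Real.sqrt (2*α) : ℂ) / (2 * csqrt (Complex.I * α))) = _
    rw [csqrt_I_mul hα, h2α]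
    have hne : (2:ℂ) * ((s:ℂ) * (1 + Complex.I)) ≠ 0 := by
      have : (1:ℂ) + Complex.I ≠ 0 := by
        intro h; simpa using congrArg Complex.re h
      have hsne : (s:ℂ) ≠ 0 := by exact_mod_cast hspos.ne'
      simp [hsne, this]
    push_cast
    have hc : (2*(s:ℂ))/(2 * ((s:ℂ) * (1 + Complex.I))) = (1 - Complex.I)/2 := by
      rw [div_eq_div_iff hne two_ne_zero]
      linear_combination (2*(s:ℂ)) * Complex.I_sq
    rw [hc]
    linear_combination (1/2 : ℂ) * Complex.I_sq
  have hΛ₂ne : Λ₂ ≠ 0 := by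
    show (α:ℂ) * (1 - (t:ℂ) + (2-(t:ℂ))*Complex.I) ≠ 0
    apply mul_ne_zero hane
    intro h
    have := congrArg Complex.im h
    simp at this
    linarith
  have ht2C : (t:ℂ)^2 = 2 := by exact_mod_cast ht2
  have hinv : (2*Λ₂)⁻¹ = (((-(1+t)/(6*α)):ℝ):ℂ) + (((-(2+t)/(6*α)):ℝ):ℂ) * Complex.I := by
    rw [eq_comm]
    apply eq_inv_of_mul_eq_one_left
    show _ * (2 * ((α:ℂ) * (1 - (t:ℂ) + (2-(t:ℂ))*Complex.I))) = 1
    push_cast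
    field_simp
    linear_combination (4*Complex.I) * ht2C + (2*(t:ℂ)^2 - 8) * Complex.I_sq
  have hMval : M = (((3/4*γ + β^2*(5-t)/(6*α)):ℝ):ℂ) + (((-(β^2*(2+t))/(6*α)):ℝ):ℂ) * Complex.I := by
    show (3/4 : ℂ) * γ + (β:ℂ)^2 * (((α:ℂ))⁻¹ + (2*Λ₂)⁻¹) = _
    rw [hinv]
    push_cast
    field_simp
    ring
  have him : ∀ a b : ℝ, (((a:ℂ) + (b:ℂ)*Complex.I) * ((s:ℂ)*(1 - Complex.I))).im = s*(b-a) := by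
    intro a b
    simp [Complex.add_im, Complex.mul_im, Complex.mul_re, Complex.ofReal_re,
      Complex.ofReal_im, Complex.I_re, Complex.I_im, Complex.one_re, Complex.one_im,
      Complex.sub_re, Complex.sub_im]
    ring
  have hnum : (M * (starRingEnd ℂ) Λ₁μ).im = s * (-(3/4)*γ - 7*β^2/(6*α)) := by
    rw [hMval, hconj, him]
    field_simp
    ring
  have hden : (Λ₁ω * (starRingEnd ℂ) Λ₁μ).im = s := by
    rw [hω, hconj]
    simp [Complex.add_im, Complex.mul_im, Complex.mul_re, Complex.div_im, Complex.div_re,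
      Complex.ofReal_re, Complex.ofReal_im, Complex.I_re, Complex.I_im,
      Complex.one_re, Complex.one_im, Complex.sub_re, Complex.sub_im,
      Complex.neg_re, Complex.neg_im]
    ring
  rw [hnum, hden]
  field_simp
  ring
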